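/- Let n ≥ 2 and let a, b ≥ 1 be integers. Then Ã_{a,b} ≠ 0 in the group algebra if and only if 0 < |a − b| < n and a + b > n. -/

import Mathlib

open Finset

/-- The alternating sum `Ã(μ) = Σ_{σ ∈ S_n} sign(σ)·X^{σ·μ}` in the group
algebra `AddMonoidAlgebra ℤ (Fin n → ℤ)`, where `(σ·μ)_i = μ_{σ⁻¹(i)}`. -/
noncomputable def Atilde (n : ℕ) (μ : Fin n → ℤ) : AddMonoidAlgebra ℤ (Fin n → ℤ) :=
  ∑ σ : Equiv.Perm (Fin n),
    (Equiv.Perm.sign σ : ℤ) • AddMonoidAlgebra.single (fun i => μ (σ⁻¹ i)) 1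

/-- The staircase tuple `ρ̃ = (n−1, n−2, …, 1, 0)`. -/
def rhoT (n : ℕ) : Fin n → ℤ := fun i => (n : ℤ) - 1 - (i : ℤ)

/-- `Ã_{a,b} = Σ Ã(ρ̃ − a(e_u − e_v))` over ordered pairs `u ≠ v` with
`v − u = a − b` (the roots of `sl_n` of height `a − b`). -/
noncomputable def AtildeAB (n : ℕ) (a b : ℕ) : AddMonoidAlgebra ℤ (Fin n → ℤ) :=
  ∑ uv : Fin n × Fin n,
    if uv.1 ≠ uv.2 ∧ ((uv.2 : ℤ) - (uv.1 : ℤ) = (a : ℤ) - (b : ℤ)) then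
      Atilde n (rhoT n - (a : ℤ) • (Pi.single uv.1 1 - Pi.single uv.2 1))
    else 0

lemma Atilde_apply (n : ℕ) (μ ν : Fin n → ℤ) :
    (Atilde n μ).coeff ν = ∑ σ : Equiv.Perm (Fin n),
      if (fun i => μ (σ⁻¹ i)) = ν then ((Equiv.Perm.sign σ : ℤ)) else 0 := by
  unfold Atilde
  rw [AddMonoidAlgebra.coeff_sum, Finsupp.finset_sum_apply]
  refine Finset.sum_congr rfl fun σ _ => ?_
  rw [AddMonoidAlgebra.coeff_smul_apply, AddMonoidAlgebra.coeff_single_apply]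
  split_ifs <;> simp

lemma Atilde_eq_zero (n : ℕ) (μ : Fin n → ℤ) {i j : Fin n} (hij : i ≠ j) (hμ : μ i = μ j) :
    Atilde n μ = 0 := by
  unfold Atilde
  refine Finset.sum_ninvolution (fun σ => σ * Equiv.swap i j) ?_ ?_ (fun _ => Finset.mem_univ _) ?_
  · intro σ
    have h1 : (fun k => μ ((σ * Equiv.swap i j)⁻¹ k)) = fun k => μ (σ⁻¹ k) := by
      funext k
      simp only [mul_inv_rev, Equiv.Perm.mul_apply, Equiv.swap_inv]
      by_cases h : σ⁻¹ k = i
      · simp [h, hμ]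
      · by_cases h' : σ⁻¹ k = j
        · simp [h', hμ]
        · rw [Equiv.swap_apply_of_ne_of_ne h h']
    rw [h1]
    have h2 : Equiv.Perm.sign (σ * Equiv.swap i j) = - Equiv.Perm.sign σ := by
      rw [Equiv.Perm.sign_mul, Equiv.Perm.sign_swap hij]
      simp
    rw [h2]
    push_cast
    rw [neg_smul, add_neg_cancel]
  · intro σ _ hc
    have hc' : σ * Equiv.swap i j = σ * 1 := by rw [mul_one]; exact hc
    exact hij (Equiv.swap_eq_one_iff.mp (mul_left_cancel hc'))
  · intro σ
    show σ * Equiv.swap i j * Equiv.swap i j = σ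
    rw [mul_assoc, Equiv.swap_mul_self, mul_one]

lemma Atilde_apply_self (n : ℕ) (μ : Fin n → ℤ) (hμ : Function.Injective μ) :
    (Atilde n μ).coeff μ = 1 := by
  rw [Atilde_apply]
  rw [Finset.sum_eq_single (1 : Equiv.Perm (Fin n))]
  · simp
  · intro σ _ hσ
    rw [if_neg]
    intro hc
    apply hσ
    have hσi : ∀ k, σ⁻¹ k = k := fun k => hμ (congrFun hc k)
    ext k
    have h2 := hσi (σ k)
    rw [show σ⁻¹ (σ k) = k from σ.symm_apply_apply k] at h2
    simpa using congrArg Fin.val h2.symm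
  · intro h; exact absurd (Finset.mem_univ _) h

lemma mu_apply (n a : ℕ) {u v : Fin n} (huv : u ≠ v) (i : Fin n) :
    ((rhoT n - (a:ℤ) • (Pi.single u 1 - Pi.single v 1) : Fin n → ℤ)) i
      = if (i:ℕ) = (u:ℕ) then (n:ℤ)-1-((i:ℕ):ℤ)-(a:ℤ)
        else if (i:ℕ) = (v:ℕ) then (n:ℤ)-1-((i:ℕ):ℤ)+(a:ℤ)
        else (n:ℤ)-1-((i:ℕ):ℤ) := by
  simp only [Pi.sub_apply, Pi.smul_apply, Pi.single_apply, smul_eq_mul, rhoT]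
  rcases eq_or_ne i u with h1 | h1
  · have h2 : i ≠ v := h1 ▸ huv
    rw [if_pos h1, if_neg h2, if_pos (congrArg Fin.val h1)]
    push_cast
    ring
  · rcases eq_or_ne i v with h2 | h2
    · rw [if_neg h1, if_pos h2, if_neg (fun h => h1 (Fin.ext h)),
        if_pos (congrArg Fin.val h2)]
      push_cast
      ring
    · rw [if_neg h1, if_neg h2, if_neg (fun h => h1 (Fin.ext h)),
        if_neg (fun h => h2 (Fin.ext h))]
      push_cast
      ring

/-- Lemma 4.5 of the paper.
For `n ≥ 2` and integers `a, b ≥ 1`, `Ã_{a,b} ≠ 0` in the group algebra if and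
only if `0 < |a − b| < n` and `a + b > n`. -/
theorem stmt10 (n : ℕ) (hn : 2 ≤ n) (a b : ℕ) (ha : 1 ≤ a) (hb : 1 ≤ b) :
    AtildeAB n a b ≠ 0 ↔
      (0 < |(a : ℤ) - (b : ℤ)| ∧ |(a : ℤ) - (b : ℤ)| < (n : ℤ) ∧ n < a + b) := by
  constructor
  · -- forward: contrapositive via explicit vanishing
    intro hne
    by_contra hc
    apply hne
    unfold AtildeAB
    apply Finset.sum_eq_zero
    rintro ⟨u, v⟩ -
    dsimp only
    split_ifs with hcnd
    swap
    · rfl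
    obtain ⟨huv, hdiff⟩ := hcnd
    have hd' : ((v:ℕ):ℤ) - ((u:ℕ):ℤ) = (a:ℤ) - (b:ℤ) := by exact_mod_cast hdiff
    have hu := u.isLt
    have hv := v.isLt
    have hP : 0 < |(a:ℤ) - (b:ℤ)| := by
      rw [abs_pos]
      intro h0
      exact huv (Fin.ext (by omega))
    have hQ : |(a:ℤ) - (b:ℤ)| < (n:ℤ) := by
      rw [abs_lt]
      omega
    have hR : a + b ≤ n := by
      by_contra hR
      exact hc ⟨hP, hQ, by omega⟩
    have hab0 : (a:ℤ) - (b:ℤ) ≠ 0 := by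
      rw [← abs_pos]; exact hP
    by_cases hca : (u:ℕ) + a < n
    · refine Atilde_eq_zero n _ (i := u) (j := ⟨(u:ℕ) + a, hca⟩) ?_ ?_
      · intro h0
        have h1 := congrArg Fin.val h0
        simp only [Fin.val_mk] at h1
        omega
      · rw [mu_apply n a huv, mu_apply n a huv]
        rw [if_pos rfl]
        rw [if_neg (show ¬((⟨(u:ℕ)+a, hca⟩ : Fin n):ℕ) = (u:ℕ) by
          simp only [Fin.val_mk]; omega)]
        rw [if_neg (show ¬((⟨(u:ℕ)+a, hca⟩ : Fin n):ℕ) = (v:ℕ) by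
          simp only [Fin.val_mk]; omega)]
        simp only [Fin.val_mk]
        push_cast
        ring
    · have hub : b ≤ (u:ℕ) := by omega
      have hlt : (u:ℕ) - b < n := by omega
      refine Atilde_eq_zero n _ (i := (⟨(u:ℕ)-b, hlt⟩ : Fin n)) (j := v) ?_ ?_
      · intro h0
        have h1 := congrArg Fin.val h0
        simp only [Fin.val_mk] at h1
        omega
      · rw [mu_apply n a huv, mu_apply n a huv]
        rw [if_neg (show ¬((⟨(u:ℕ)-b, hlt⟩ : Fin n):ℕ) = (u:ℕ) by
          simp only [Fin.val_mk]; omega)]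
        rw [if_neg (show ¬((⟨(u:ℕ)-b, hlt⟩ : Fin n):ℕ) = (v:ℕ) by
          simp only [Fin.val_mk]; omega)]
        rw [if_neg (show ¬((v:ℕ) = (u:ℕ)) by omega)]
        rw [if_pos rfl]
        simp only [Fin.val_mk]
        push_cast
        omega
  · rintro ⟨hP, hQ, hR⟩
    have habs := abs_lt.mp hQ
    obtain ⟨h1n, h2n⟩ := habs
    have hab0 : (a:ℤ) - (b:ℤ) ≠ 0 := by rw [← abs_pos]; exact hP
    set u₀ := max (n - a) (b - a) with hu₀
    have h1 : n - a ≤ u₀ := le_max_left _ _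
    have h2 : b - a ≤ u₀ := le_max_right _ _
    have hch := max_choice (n - a) (b - a)
    rw [← hu₀] at hch
    have hu₀b : u₀ < b := by rcases hch with h | h <;> omega
    have hu₀n : u₀ < n := by rcases hch with h | h <;> omega
    have hvn : u₀ + a - b < n := by rcases hch with h | h <;> omega
    have hba : b ≤ u₀ + a := by omega
    set u' : Fin n := ⟨u₀, hu₀n⟩ with hu'
    set v' : Fin n := ⟨u₀ + a - b, hvn⟩ with hv'
    have hu'v : (u':ℕ) = u₀ := rfl
    have hv'v : (v':ℕ) = u₀ + a - b := rfl
    have hne' : u' ≠ v' := by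
      intro h0
      have h3 := congrArg Fin.val h0
      rw [hu'v, hv'v] at h3
      omega
    have hdint : ((v' : ℤ)) - ((u' : ℤ)) = (a:ℤ) - (b:ℤ) := by
      have e1 : ((v' : ℤ)) = ((v':ℕ):ℤ) := rfl
      have e2 : ((u' : ℤ)) = ((u':ℕ):ℤ) := rfl
      rw [e1, e2, hu'v, hv'v]
      omega
    have hinj : Function.Injective
        (rhoT n - (a:ℤ) • (Pi.single u' 1 - Pi.single v' 1) : Fin n → ℤ) := by
      intro i j hij
      rw [mu_apply n a hne', mu_apply n a hne'] at hij
      have hi := i.isLt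
      have hj := j.isLt
      rw [hu'v, hv'v] at hij
      apply Fin.ext
      split_ifs at hij <;> omega
    intro h0
    have hcoeff : (AtildeAB n a b).coeff
        (rhoT n - (a:ℤ) • (Pi.single u' 1 - Pi.single v' 1)) = 1 := by
      unfold AtildeAB
      rw [AddMonoidAlgebra.coeff_sum, Finsupp.finset_sum_apply]
      rw [Finset.sum_eq_single ((u', v') : Fin n × Fin n)]
      · split_ifs with hcnd
        · exact Atilde_apply_self n _ hinj
        · exact absurd ⟨hne', hdint⟩ hcnd
      · rintro ⟨u, v⟩ - hp
        dsimp only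
        split_ifs with hcnd
        swap
        · simp
        obtain ⟨huv2, hdiff2⟩ := hcnd
        have hd2 : ((v:ℕ):ℤ) - ((u:ℕ):ℤ) = (a:ℤ) - (b:ℤ) := by exact_mod_cast hdiff2
        have hu := u.isLt
        have hv := v.isLt
        rw [Atilde_apply]
        apply Finset.sum_eq_zero
        rintro σ -
        rw [if_neg]
        intro hfun
        have hval := congrFun hfun u'
        rw [mu_apply n a huv2, mu_apply n a hne'] at hval
        have hk := (σ⁻¹ u').isLt
        rw [hu'v, hv'v] at hval
        have e1 : u = u' := Fin.ext (by split_ifs at hval <;> omega)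
        have e1' : (u:ℕ) = u₀ := by rw [e1, hu'v]
        have e2 : v = v' := Fin.ext (by omega)
        exact hp (by rw [e1, e2])
      · intro h; exact absurd (Finset.mem_univ _) h
    rw [h0] at hcoeff
    simp at hcoeff
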